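/- There exist constants c > 0 and C > 0, depending only on ρ̄, μ and γ, such that for all x₃ ∈ ℝ and t ≥ 0: 0 < ϑ₋(x₃,t)(1 + θ(x₃,t)) ≤ C e^{−c(t+Λ)} ( exp(−|x₃ − λ₀⁻(t+Λ)|²/(8(t+Λ))) + exp(−ρ̄ x₃²/(32μ(t+Λ))) ), and likewise 0 < ϑ₊(x₃,t)(1 − θ(x₃,t)) ≤ C e^{−c(t+Λ)} ( exp(−|x₃ − λ₃⁺(t+Λ)|²/(8(t+Λ))) + exp(−ρ̄ x₃²/(32μ(t+Λ))) ). -/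

import Mathlib

open Real MeasureTheory Filter Topology

/-- The self-similar profile `Θ(ξ) = (2/√π) ∫₀^{(1/2)√(ρ̄/μ) ξ} e^{-η²} dη`. -/
noncomputable def Theta (ρb μ : ℝ) (ξ : ℝ) : ℝ :=
  (2 / Real.sqrt Real.pi) * ∫ η in (0:ℝ)..((1/2) * Real.sqrt (ρb/μ) * ξ), Real.exp (-η^2)

/-- `θ(x₃,t) = Θ(x₃/√(t+Λ))`. -/
noncomputable def theta (ρb μ Λ : ℝ) (x t : ℝ) : ℝ :=
  Theta ρb μ (x / Real.sqrt (t + Λ))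

/-- The heat kernel profile `ϑ(x₃,t) = (2√(π(t+Λ)))⁻¹ exp(-x₃²/(4(t+Λ)))`. -/
noncomputable def vtheta (Λ : ℝ) (x t : ℝ) : ℝ :=
  (1 / (2 * Real.sqrt (Real.pi * (t + Λ)))) * Real.exp (-x^2 / (4 * (t + Λ)))

/-- The transversal characteristic speed `λ₀⁻ = -√(γρ̄^{γ-1})`. -/
noncomputable def lam0 (ρb γ : ℝ) : ℝ := -Real.sqrt (γ * ρb ^ (γ - 1))

/-- The transversal characteristic speed `λ₃⁺ = √(γρ̄^{γ-1})`. -/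
noncomputable def lam3 (ρb γ : ℝ) : ℝ := Real.sqrt (γ * ρb ^ (γ - 1))

/-- The diffusion wave `ϑ₋(x₃,t) = ϑ(x₃ - λ₀⁻(t+Λ), t)`. -/
noncomputable def vthm (ρb γ Λ : ℝ) (x t : ℝ) : ℝ :=
  vtheta Λ (x - lam0 ρb γ * (t + Λ)) t

/-- The diffusion wave `ϑ₊(x₃,t) = ϑ(x₃ - λ₃⁺(t+Λ), t)`. -/
noncomputable def vthp (ρb γ Λ : ℝ) (x t : ℝ) : ℝ :=
  vtheta Λ (x - lam3 ρb γ * (t + Λ)) t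

/- ------------------ auxiliary lemmas ------------------- -/

lemma aux_integrable : MeasureTheory.Integrable (fun x : ℝ => Real.exp (-x^2)) := by
  have := integrable_exp_neg_mul_sq (b := (1:ℝ)) one_pos
  simpa using this

lemma aux_integrable_half : MeasureTheory.Integrable (fun x : ℝ => Real.exp (-2⁻¹ * x^2)) :=
  integrable_exp_neg_mul_sq (by norm_num)

lemma aux_Ioi0 : ∫ x in Set.Ioi (0:ℝ), Real.exp (-x^2) = Real.sqrt π / 2 := by
  have := integral_gaussian_Ioi 1
  simpa using this

lemma aux_tail_pos (z : ℝ) : 0 < ∫ x in Set.Ioi z, Real.exp (-x^2) := by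
  have h1 : 0 < ∫ x in z..(z+1), Real.exp (-x^2) :=
    intervalIntegral.intervalIntegral_pos_of_pos (aux_integrable.intervalIntegrable)
      (fun x => Real.exp_pos _) (by linarith)
  have h2 : (∫ x in z..(z+1), Real.exp (-x^2)) ≤ ∫ x in Set.Ioi z, Real.exp (-x^2) := by
    rw [intervalIntegral.integral_of_le (by linarith)]
    refine setIntegral_mono_set aux_integrable.integrableOn ?_ ?_
    · exact Filter.Eventually.of_forall fun x => (Real.exp_pos _).le
    · exact Filter.Eventually.of_forall fun x hx => hx.1
  linarith

lemma aux_split (z : ℝ) (hz : 0 ≤ z) :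
    (∫ x in (0:ℝ)..z, Real.exp (-x^2)) + (∫ x in Set.Ioi z, Real.exp (-x^2))
      = Real.sqrt π / 2 := by
  rw [intervalIntegral.integral_of_le hz, ← aux_Ioi0, ← Set.Ioc_union_Ioi_eq_Ioi hz,
    MeasureTheory.setIntegral_union Set.Ioc_disjoint_Ioi_same measurableSet_Ioi
      aux_integrable.integrableOn aux_integrable.integrableOn]

lemma aux_E_lt (w : ℝ) : (∫ x in (0:ℝ)..w, Real.exp (-x^2)) < Real.sqrt π / 2 := by
  have hπ : 0 < Real.sqrt π := Real.sqrt_pos.mpr Real.pi_pos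
  rcases le_or_gt w 0 with hw | hw
  · have : (∫ x in (0:ℝ)..w, Real.exp (-x^2)) ≤ 0 := by
      rw [intervalIntegral.integral_symm]
      have : 0 ≤ ∫ x in w..(0:ℝ), Real.exp (-x^2) :=
        intervalIntegral.integral_nonneg hw (fun x _ => (Real.exp_pos _).le)
      linarith
    linarith
  · have := aux_split w hw.le
    have := aux_tail_pos w
    linarith

lemma aux_E_odd (w : ℝ) :
    (∫ x in (0:ℝ)..(-w), Real.exp (-x^2)) = -∫ x in (0:ℝ)..w, Real.exp (-x^2) := by
  have h := intervalIntegral.integral_comp_neg (a := (0:ℝ)) (b := w)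
    (f := fun x => Real.exp (-x^2))
  simp only [neg_zero] at h
  have h2 : (∫ x in (0:ℝ)..w, Real.exp (-(-x)^2)) = ∫ x in (0:ℝ)..w, Real.exp (-x^2) := by
    simp [neg_sq]
  rw [h2] at h
  have h3 : (∫ x in (-w)..(0:ℝ), Real.exp (-x^2)) = -∫ x in (0:ℝ)..(-w), Real.exp (-x^2) :=
    intervalIntegral.integral_symm 0 (-w)
  rw [h3] at h
  linarith

lemma aux_tail_le (z : ℝ) (hz : 0 ≤ z) :
    (∫ x in Set.Ioi z, Real.exp (-x^2))
      ≤ Real.sqrt (2*π) * Real.exp (-2⁻¹ * z^2) := by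
  have h1 : (∫ x in Set.Ioi z, Real.exp (-x^2))
      ≤ ∫ x in Set.Ioi z, Real.exp (-2⁻¹ * z^2) * Real.exp (-2⁻¹ * x^2) := by
    refine setIntegral_mono_on aux_integrable.integrableOn
      ((aux_integrable_half.const_mul _).integrableOn) measurableSet_Ioi ?_
    intro x hx
    rw [← Real.exp_add]
    apply Real.exp_le_exp.mpr
    have hzx : z ≤ x := le_of_lt hx
    nlinarith
  have h2 : (∫ x in Set.Ioi z, Real.exp (-2⁻¹ * z^2) * Real.exp (-2⁻¹ * x^2))
      = Real.exp (-2⁻¹ * z^2) * ∫ x in Set.Ioi z, Real.exp (-2⁻¹ * x^2) :=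
    MeasureTheory.integral_const_mul _ _
  have h3 : (∫ x in Set.Ioi z, Real.exp (-2⁻¹ * x^2)) ≤ Real.sqrt (2*π) := by
    have h4 : (∫ x in Set.Ioi z, Real.exp (-2⁻¹ * x^2)) ≤ ∫ x : ℝ, Real.exp (-2⁻¹ * x^2) :=
      setIntegral_le_integral aux_integrable_half
        (Filter.Eventually.of_forall fun x => (Real.exp_pos _).le)
    have h5 : (∫ x : ℝ, Real.exp (-2⁻¹ * x^2)) = Real.sqrt (π / 2⁻¹) := integral_gaussian _
    rw [h5] at h4
    have : π / 2⁻¹ = 2 * π := by ring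
    rwa [this] at h4
  calc (∫ x in Set.Ioi z, Real.exp (-x^2))
      ≤ Real.exp (-2⁻¹ * z^2) * ∫ x in Set.Ioi z, Real.exp (-2⁻¹ * x^2) := by rw [← h2]; exact h1
    _ ≤ Real.exp (-2⁻¹ * z^2) * Real.sqrt (2*π) := by
        exact mul_le_mul_of_nonneg_left h3 (Real.exp_pos _).le
    _ = Real.sqrt (2*π) * Real.exp (-2⁻¹ * z^2) := by ring

lemma aux_two_div_sqrt_pi : (2 / Real.sqrt π) * (Real.sqrt π / 2) = 1 := by
  have hπ : Real.sqrt π ≠ 0 := ne_of_gt (Real.sqrt_pos.mpr Real.pi_pos)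
  field_simp

lemma Theta_lt_one (ρb μ ξ : ℝ) : Theta ρb μ ξ < 1 := by
  have hπ : 0 < 2 / Real.sqrt π := by
    have := Real.sqrt_pos.mpr Real.pi_pos; positivity
  have h := aux_E_lt ((1/2) * Real.sqrt (ρb/μ) * ξ)
  have := mul_lt_mul_of_pos_left h hπ
  rw [aux_two_div_sqrt_pi] at this
  exact this

lemma Theta_neg (ρb μ ξ : ℝ) : Theta ρb μ (-ξ) = -Theta ρb μ ξ := by
  unfold Theta
  rw [show (1/2) * Real.sqrt (ρb/μ) * (-ξ) = -((1/2) * Real.sqrt (ρb/μ) * ξ) by ring,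
    aux_E_odd]
  ring

lemma neg_one_lt_Theta (ρb μ ξ : ℝ) : -1 < Theta ρb μ ξ := by
  have := Theta_lt_one ρb μ (-ξ)
  rw [Theta_neg] at this
  linarith

lemma one_sub_Theta_le (ρb μ ξ : ℝ) (h : 0 ≤ (1/2) * Real.sqrt (ρb/μ) * ξ) :
    1 - Theta ρb μ ξ ≤ 3 * Real.exp (-2⁻¹ * ((1/2) * Real.sqrt (ρb/μ) * ξ)^2) := by
  set w := (1/2) * Real.sqrt (ρb/μ) * ξ with hw
  have hπ : 0 < Real.sqrt π := Real.sqrt_pos.mpr Real.pi_pos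
  have hsplit := aux_split w h
  have htail := aux_tail_le w h
  have h1 : 1 - Theta ρb μ ξ = (2 / Real.sqrt π) * ∫ x in Set.Ioi w, Real.exp (-x^2) := by
    unfold Theta
    rw [← hw]
    have : (∫ x in (0:ℝ)..w, Real.exp (-x^2))
        = Real.sqrt π / 2 - ∫ x in Set.Ioi w, Real.exp (-x^2) := by linarith
    rw [this]
    have := aux_two_div_sqrt_pi
    field_simp
    ring
  rw [h1]
  have h2 : (2 / Real.sqrt π) * ∫ x in Set.Ioi w, Real.exp (-x^2)
      ≤ (2 / Real.sqrt π) * (Real.sqrt (2*π) * Real.exp (-2⁻¹ * w^2)) := by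
    apply mul_le_mul_of_nonneg_left htail (by positivity)
  refine h2.trans ?_
  have hkey : (2 / Real.sqrt π) * (Real.sqrt (2*π) * Real.exp (-2⁻¹ * w^2))
      = 2 * Real.sqrt 2 * Real.exp (-2⁻¹ * w^2) := by
    rw [Real.sqrt_mul (by norm_num : (0:ℝ) ≤ 2)]
    field_simp
  rw [hkey]
  have hs2 : Real.sqrt 2 ≤ 3/2 := by
    rw [show (3:ℝ)/2 = Real.sqrt ((3/2)^2) by rw [Real.sqrt_sq (by norm_num : (0:ℝ) ≤ 3/2)]]
    exact Real.sqrt_le_sqrt (by norm_num)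
  nlinarith [Real.exp_pos (-2⁻¹ * w^2)]

noncomputable def myc (ρb μ γ : ℝ) : ℝ :=
  min ((γ * ρb ^ (γ - 1)) / 32) (3 * ρb * (γ * ρb ^ (γ - 1)) / (128 * μ))

lemma myc_pos (ρb μ γ : ℝ) (hρb : 0 < ρb) (hμ : 0 < μ) (hγ : 1 < γ) : 0 < myc ρb μ γ := by
  have hA : 0 < γ * ρb ^ (γ - 1) := mul_pos (by linarith) (Real.rpow_pos_of_pos hρb _)
  exact lt_min (by positivity) (by positivity)

lemma theta_lt_one (ρb μ Λ x t : ℝ) : theta ρb μ Λ x t < 1 := Theta_lt_one _ _ _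

lemma neg_one_lt_theta (ρb μ Λ x t : ℝ) : -1 < theta ρb μ Λ x t := neg_one_lt_Theta _ _ _

lemma theta_neg (ρb μ Λ x t : ℝ) : theta ρb μ Λ (-x) t = -theta ρb μ Λ x t := by
  unfold theta
  rw [neg_div, Theta_neg]

lemma one_sub_theta_le (ρb μ Λ x t : ℝ) (hρb : 0 < ρb) (hμ : 0 < μ)
    (hx : 0 ≤ x) (hs : 0 < t + Λ) :
    1 - theta ρb μ Λ x t ≤ 3 * Real.exp (-(ρb * x^2) / (8 * μ * (t + Λ))) := by
  have hb : 0 ≤ (1/2) * Real.sqrt (ρb/μ) * (x / Real.sqrt (t+Λ)) := by positivity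
  have h := one_sub_Theta_le ρb μ (x / Real.sqrt (t+Λ)) hb
  unfold theta
  have h1 : (Real.sqrt (ρb/μ))^2 = ρb/μ := Real.sq_sqrt (by positivity)
  have h2 : (Real.sqrt (t+Λ))^2 = t+Λ := Real.sq_sqrt hs.le
  have e : -2⁻¹ * ((1/2) * Real.sqrt (ρb/μ) * (x / Real.sqrt (t+Λ)))^2
      = -(ρb * x^2) / (8 * μ * (t + Λ)) := by
    have e1 : ((1/2) * Real.sqrt (ρb/μ) * (x / Real.sqrt (t+Λ)))^2
        = (1/4) * (ρb/μ) * (x^2 / (t+Λ)) := by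
      rw [mul_pow, mul_pow, div_pow, div_pow, h1, h2]
      norm_num
    rw [e1]
    field_simp [hμ.ne', hs.ne']
    ring
  rw [e] at h
  exact h

lemma vthm_eq (ρb γ Λ x t : ℝ) : vthm ρb γ Λ x t = vthp ρb γ Λ (-x) t := by
  unfold vthm vthp vtheta lam0 lam3
  rw [show x - -Real.sqrt (γ*ρb^(γ-1)) * (t+Λ)
      = -(-x - Real.sqrt (γ*ρb^(γ-1)) * (t+Λ)) by ring, neg_sq]

set_option maxHeartbeats 1000000 in
lemma plus_bound (ρb μ γ : ℝ) (hρb : 0 < ρb) (hμ : 0 < μ) (hγ : 1 < γ)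
    (Λ : ℝ) (hΛ : 1 ≤ Λ) (x t : ℝ) (ht : 0 ≤ t) :
    0 < vthp ρb γ Λ x t * (1 - theta ρb μ Λ x t) ∧
      vthp ρb γ Λ x t * (1 - theta ρb μ Λ x t)
        ≤ 3 * Real.exp (-(myc ρb μ γ) * (t + Λ)) *
            (Real.exp (-(x - lam3 ρb γ * (t + Λ))^2 / (8 * (t + Λ)))
              + Real.exp (-(ρb * x^2) / (32 * μ * (t + Λ)))) := by
  have hs0 : 0 < t + Λ := by linarith
  have hs1 : 1 ≤ t + Λ := by linarith
  have hsne : (t+Λ) ≠ 0 := ne_of_gt (by linarith)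
  have hA : 0 < γ * ρb ^ (γ - 1) := mul_pos (by linarith) (Real.rpow_pos_of_pos hρb _)
  have hlam : 0 < lam3 ρb γ := Real.sqrt_pos.mpr hA
  have hlam2 : (lam3 ρb γ)^2 = γ * ρb ^ (γ - 1) := Real.sq_sqrt hA.le
  have hθ1 : theta ρb μ Λ x t < 1 := theta_lt_one _ _ _ _ _
  have hθ2 : -1 < theta ρb μ Λ x t := neg_one_lt_theta _ _ _ _ _
  have hsq : 0 < Real.sqrt (π * (t+Λ)) := Real.sqrt_pos.mpr (mul_pos Real.pi_pos hs0)
  have hκpos : 0 < 1 / (2 * Real.sqrt (π * (t+Λ))) := by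
    apply one_div_pos.mpr; linarith
  have hκ : 1 / (2 * Real.sqrt (π * (t+Λ))) ≤ 1 := by
    rw [div_le_one (by linarith)]
    have h1 : (1:ℝ) ≤ π * (t+Λ) := by nlinarith [Real.pi_gt_three]
    have h2 : (1:ℝ) ≤ Real.sqrt (π * (t+Λ)) := by
      rw [show (1:ℝ) = Real.sqrt 1 from Real.sqrt_one.symm]
      exact Real.sqrt_le_sqrt h1
    linarith
  have hG1 : (0:ℝ) ≤ Real.exp (-(x - lam3 ρb γ * (t+Λ))^2 / (8*(t+Λ))) := (Real.exp_pos _).le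
  have hG2 : (0:ℝ) ≤ Real.exp (-(ρb*x^2)/(32*μ*(t+Λ))) := (Real.exp_pos _).le
  have hLs : 0 < lam3 ρb γ * (t+Λ) := mul_pos hlam hs0
  have hcle : myc ρb μ γ ≤ (lam3 ρb γ)^2 / 32 := by
    rw [hlam2]; exact min_le_left _ _
  have hcleB : myc ρb μ γ * (128 * μ) ≤ 3 * ρb * (lam3 ρb γ)^2 := by
    rw [← le_div_iff₀ (by linarith : (0:ℝ) < 128 * μ), hlam2]
    exact min_le_right _ _
  simp only [vthp, vtheta]
  set L := lam3 ρb γ with hLdef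
  set cc := myc ρb μ γ with hccdef
  constructor
  · exact mul_pos (mul_pos hκpos (Real.exp_pos _)) (by linarith)
  rcases le_or_gt x (L * (t+Λ) / 2) with hx | hx
  · -- Case A : x away from the wave on the left
    have f1 : 0 ≤ L * (t+Λ)/2 - x := by linarith
    have f2 : 0 ≤ 3 * (L * (t+Λ))/2 - x := by linarith
    have hq : (L * (t+Λ)/2)^2 ≤ (x - L * (t+Λ))^2 := by
      nlinarith [mul_nonneg f1 f2]
    have hmyc_s : cc * (t+Λ) ≤ (x - L * (t+Λ))^2 / (8*(t+Λ)) := by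
      rw [le_div_iff₀ (by linarith : (0:ℝ) < 8*(t+Λ))]
      nlinarith [mul_le_mul_of_nonneg_right hcle
        (show (0:ℝ) ≤ (t+Λ)*(8*(t+Λ)) by positivity)]
    have hexp : Real.exp (-(x - L * (t+Λ))^2/(4*(t+Λ)))
        ≤ Real.exp (-(x - L * (t+Λ))^2/(8*(t+Λ)))
          * Real.exp (-(cc) * (t+Λ)) := by
      rw [← Real.exp_add]
      apply Real.exp_le_exp.mpr
      have e : -(x - L * (t+Λ))^2/(4*(t+Λ))
          = -(x - L * (t+Λ))^2/(8*(t+Λ))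
            + -((x - L * (t+Λ))^2/(8*(t+Λ))) := by
        field_simp
        ring
      rw [e]
      have : -((x - L * (t+Λ))^2/(8*(t+Λ))) ≤ -(cc) * (t+Λ) := by linarith
      linarith
    have step : 1 / (2 * Real.sqrt (π * (t+Λ)))
          * Real.exp (-(x - L * (t+Λ))^2/(4*(t+Λ))) * (1 - theta ρb μ Λ x t)
        ≤ 1 * (Real.exp (-(x - L * (t+Λ))^2/(8*(t+Λ)))
            * Real.exp (-(cc) * (t+Λ))) * 2 := by
      apply mul_le_mul _ (by linarith) (by linarith) _
      · exact mul_le_mul hκ hexp (Real.exp_pos _).le (by norm_num)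
      · positivity
    refine step.trans ?_
    nlinarith [mul_nonneg (Real.exp_pos (-(cc) * (t+Λ))).le hG1,
      mul_nonneg (Real.exp_pos (-(cc) * (t+Λ))).le hG2]
  · -- Case B : x to the right, use the erfc tail
    have hx0 : 0 < x := by linarith
    have h1θ := one_sub_theta_le ρb μ Λ x t hρb hμ hx0.le hs0
    have hE1 : Real.exp (-(x - L * (t+Λ))^2/(4*(t+Λ))) ≤ 1 := by
      apply Real.exp_le_one_iff.mpr
      apply div_nonpos_of_nonpos_of_nonneg (neg_nonpos_of_nonneg (sq_nonneg _))
      linarith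
    have hx2 : (L * (t+Λ)/2)^2 ≤ x^2 := by
      nlinarith [mul_self_le_mul_self (show (0:ℝ) ≤ L * (t+Λ)/2 by linarith) hx.le]
    have key : cc * (t+Λ) ≤ 3 * (ρb * x^2) / (32*μ*(t+Λ)) := by
      rw [le_div_iff₀ (show (0:ℝ) < 32*μ*(t+Λ) by
        have := mul_pos (mul_pos (show (0:ℝ) < 32 by norm_num) hμ) hs0; linarith)]
      nlinarith [mul_le_mul_of_nonneg_right hcleB
          (show (0:ℝ) ≤ (t+Λ)^2/4 by positivity),
        mul_le_mul_of_nonneg_left hx2 (show (0:ℝ) ≤ 3*ρb by linarith)]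
    have hsplit : Real.exp (-(ρb * x^2)/(8*μ*(t+Λ)))
        ≤ Real.exp (-(cc) * (t+Λ)) * Real.exp (-(ρb * x^2)/(32*μ*(t+Λ))) := by
      rw [← Real.exp_add]
      apply Real.exp_le_exp.mpr
      have e : -(ρb * x^2)/(8*μ*(t+Λ))
          = -(ρb * x^2)/(32*μ*(t+Λ)) + -(3 * (ρb * x^2) / (32*μ*(t+Λ))) := by
        field_simp
        ring
      rw [e]
      linarith
    have s1 : 1 / (2 * Real.sqrt (π * (t+Λ)))
          * Real.exp (-(x - L * (t+Λ))^2/(4*(t+Λ))) ≤ 1 :=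
      mul_le_one₀ hκ (Real.exp_pos _).le hE1
    have s2 : 1 / (2 * Real.sqrt (π * (t+Λ)))
          * Real.exp (-(x - L * (t+Λ))^2/(4*(t+Λ))) * (1 - theta ρb μ Λ x t)
        ≤ 1 * (3 * Real.exp (-(ρb * x^2)/(8*μ*(t+Λ)))) :=
      mul_le_mul s1 h1θ (by linarith) (by norm_num)
    refine s2.trans ?_
    have s3 : (3:ℝ) * Real.exp (-(ρb * x^2)/(8*μ*(t+Λ)))
        ≤ 3 * (Real.exp (-(cc) * (t+Λ)) * Real.exp (-(ρb * x^2)/(32*μ*(t+Λ)))) := by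
      nlinarith [hsplit]
    have s4 : (3:ℝ) * (Real.exp (-(cc) * (t+Λ)) * Real.exp (-(ρb * x^2)/(32*μ*(t+Λ))))
        ≤ 3 * Real.exp (-(cc) * (t+Λ)) *
            (Real.exp (-(x - L * (t+Λ))^2 / (8 * (t+Λ)))
              + Real.exp (-(ρb * x^2) / (32 * μ * (t+Λ)))) := by
      nlinarith [mul_nonneg (Real.exp_pos (-(cc) * (t+Λ))).le hG1,
        mul_nonneg (Real.exp_pos (-(cc) * (t+Λ))).le hG2]
    linarith

theorem stmt16 (ρb μ γ : ℝ) (hρb : 0 < ρb) (hμ : 0 < μ) (hγ : 1 < γ) :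
    ∃ c : ℝ, 0 < c ∧ ∃ C : ℝ, 0 < C ∧
    ∀ Λ : ℝ, 1 ≤ Λ → ∀ x t : ℝ, 0 ≤ t →
      (0 < vthm ρb γ Λ x t * (1 + theta ρb μ Λ x t) ∧
        vthm ρb γ Λ x t * (1 + theta ρb μ Λ x t)
          ≤ C * Real.exp (-c * (t + Λ)) *
              (Real.exp (-(x - lam0 ρb γ * (t + Λ))^2 / (8 * (t + Λ)))
                + Real.exp (-(ρb * x^2) / (32 * μ * (t + Λ))))) ∧
      (0 < vthp ρb γ Λ x t * (1 - theta ρb μ Λ x t) ∧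
        vthp ρb γ Λ x t * (1 - theta ρb μ Λ x t)
          ≤ C * Real.exp (-c * (t + Λ)) *
              (Real.exp (-(x - lam3 ρb γ * (t + Λ))^2 / (8 * (t + Λ)))
                + Real.exp (-(ρb * x^2) / (32 * μ * (t + Λ))))) := by
  refine ⟨myc ρb μ γ, myc_pos ρb μ γ hρb hμ hγ, 3, by norm_num, ?_⟩
  intro Λ hΛ x t ht
  have hplus := plus_bound ρb μ γ hρb hμ hγ Λ hΛ x t ht
  have hminus := plus_bound ρb μ γ hρb hμ hγ Λ hΛ (-x) t ht
  refine ⟨?_, hplus⟩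
  have e1 : vthm ρb γ Λ x t * (1 + theta ρb μ Λ x t)
      = vthp ρb γ Λ (-x) t * (1 - theta ρb μ Λ (-x) t) := by
    rw [vthm_eq, theta_neg]; ring
  have e2 : (x - lam0 ρb γ * (t+Λ))^2 = (-x - lam3 ρb γ * (t+Λ))^2 := by
    unfold lam0 lam3; ring
  have e3 : (ρb * x^2) = ρb * (-x)^2 := by ring
  constructor
  · rw [e1]; exact hminus.1
  · rw [e1, e2, e3]; exact hminus.2
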